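/- Let R be a left coherent ring and let M be a finitely presented left R-module that is 𝒜-coherent. Then any direct product of strongly M-𝒜-flat right R-modules is strongly M-𝒜-flat. -/

import Mathlib

open TensorProduct MulOpposite CategoryTheory

universe u

section NC

variable (R : Type u) [Ring R]

/-- The defining relations of the tensor product `N ⊗[R] X` of a right `R`-module `N`
and a left `R`-module `X` over a (possibly noncommutative) ring `R`, inside `N ⊗[ℤ] X`. -/
def ncRel (N : Type u) [AddCommGroup N] [Module Rᵐᵒᵖ N]
    (X : Type u) [AddCommGroup X] [Module R X] : Submodule ℤ (N ⊗[ℤ] X) :=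
  Submodule.span ℤ {z | ∃ (r : R) (n : N) (x : X), z = (op r • n) ⊗ₜ[ℤ] x - n ⊗ₜ[ℤ] (r • x)}

/-- The tensor product `N ⊗[R] X` of a right `R`-module `N` and a left `R`-module `X`
over a (possibly noncommutative) ring `R`. -/
abbrev NCTensor (N : Type u) [AddCommGroup N] [Module Rᵐᵒᵖ N]
    (X : Type u) [AddCommGroup X] [Module R X] : Type u :=
  (N ⊗[ℤ] X) ⧸ ncRel R N X

/-- Functoriality of the tensor product in the left (right-module) variable. -/
noncomputable def ncMapL {N N' : Type u} [AddCommGroup N] [Module Rᵐᵒᵖ N]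
    [AddCommGroup N'] [Module Rᵐᵒᵖ N'] (g : N →ₗ[Rᵐᵒᵖ] N')
    (X : Type u) [AddCommGroup X] [Module R X] :
    NCTensor R N X →ₗ[ℤ] NCTensor R N' X :=
  Submodule.mapQ _ _ (LinearMap.rTensor X g.toAddMonoidHom.toIntLinearMap :
      N ⊗[ℤ] X →ₗ[ℤ] N' ⊗[ℤ] X) (by
    rw [ncRel, Submodule.span_le]
    rintro _ ⟨r, n, x, rfl⟩
    show LinearMap.rTensor X g.toAddMonoidHom.toIntLinearMap
      ((op r • n) ⊗ₜ[ℤ] x - n ⊗ₜ[ℤ] (r • x)) ∈ ncRel R N' X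
    simp only [SetLike.mem_coe, Submodule.mem_comap, map_sub, LinearMap.rTensor_tmul]
    have h : g.toAddMonoidHom.toIntLinearMap (op r • n) =
        op r • g.toAddMonoidHom.toIntLinearMap n := by
      simp [map_smul]
    rw [h]
    exact Submodule.subset_span ⟨r, g n, x, rfl⟩)

/-- Functoriality of the tensor product in the right (left-module) variable. -/
noncomputable def ncMap (N : Type u) [AddCommGroup N] [Module Rᵐᵒᵖ N]
    {X Y : Type u} [AddCommGroup X] [Module R X] [AddCommGroup Y] [Module R Y]
    (f : X →ₗ[R] Y) : NCTensor R N X →ₗ[ℤ] NCTensor R N Y :=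
  Submodule.mapQ _ _ (LinearMap.lTensor N f.toAddMonoidHom.toIntLinearMap :
      N ⊗[ℤ] X →ₗ[ℤ] N ⊗[ℤ] Y) (by
    rw [ncRel, Submodule.span_le]
    rintro _ ⟨r, n, x, rfl⟩
    show LinearMap.lTensor N f.toAddMonoidHom.toIntLinearMap
      ((op r • n) ⊗ₜ[ℤ] x - n ⊗ₜ[ℤ] (r • x)) ∈ ncRel R N Y
    simp only [SetLike.mem_coe, Submodule.mem_comap, map_sub, LinearMap.lTensor_tmul]
    have h : f.toAddMonoidHom.toIntLinearMap (r • x) =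
        r • f.toAddMonoidHom.toIntLinearMap x := by
      simp [map_smul]
    rw [h]
    exact Submodule.subset_span ⟨r, n, f x, rfl⟩)

lemma ncMap_mk (N : Type u) [AddCommGroup N] [Module Rᵐᵒᵖ N]
    {X Y : Type u} [AddCommGroup X] [Module R X] [AddCommGroup Y] [Module R Y]
    (f : X →ₗ[R] Y) (w : N ⊗[ℤ] X) :
    ncMap R N f (Submodule.Quotient.mk w) =
      Submodule.Quotient.mk (LinearMap.lTensor N f.toAddMonoidHom.toIntLinearMap w) := by
  unfold ncMap
  exact Submodule.mapQ_apply (p := ncRel R N X) (q := ncRel R N Y) (LinearMap.lTensor N f.toAddMonoidHom.toIntLinearMap) w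

section lemmas

variable {R}
variable {X Y Z : Type u} [AddCommGroup X] [Module R X] [AddCommGroup Y] [Module R Y]
  [AddCommGroup Z] [Module R Z]

lemma toInt_id : ((LinearMap.id : X →ₗ[R] X).toAddMonoidHom).toIntLinearMap =
    (LinearMap.id : X →ₗ[ℤ] X) := rfl

lemma toInt_comp (f : X →ₗ[R] Y) (g : Y →ₗ[R] Z) :
    ((g ∘ₗ f).toAddMonoidHom).toIntLinearMap =
      g.toAddMonoidHom.toIntLinearMap ∘ₗ f.toAddMonoidHom.toIntLinearMap := rfl

lemma toInt_add (f g : X →ₗ[R] Y) :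
    ((f + g).toAddMonoidHom).toIntLinearMap =
      f.toAddMonoidHom.toIntLinearMap + g.toAddMonoidHom.toIntLinearMap := rfl

end lemmas

/-- The functor `N ⊗[R] - : R-Mod ⥤ Ab` for a right `R`-module `N`. -/
noncomputable def ncTensorFunctor (N : Type u) [AddCommGroup N] [Module Rᵐᵒᵖ N] :
    ModuleCat.{u} R ⥤ ModuleCat.{u} ℤ where
  obj X := ModuleCat.of ℤ (NCTensor R N X)
  map {X Y} f := ModuleCat.ofHom (ncMap R N f.hom)
  map_id X := by
    refine ModuleCat.hom_ext (LinearMap.ext fun z => ?_)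
    obtain ⟨w, rfl⟩ := Submodule.Quotient.mk_surjective _ z
    show ncMap R N (LinearMap.id : X →ₗ[R] X) _ = _
    rw [ncMap_mk, toInt_id, LinearMap.lTensor_id]
    rfl
  map_comp {X Y Z} f g := by
    refine ModuleCat.hom_ext (LinearMap.ext fun z => ?_)
    obtain ⟨w, rfl⟩ := Submodule.Quotient.mk_surjective _ z
    show ncMap R N (g.hom ∘ₗ f.hom) (Submodule.Quotient.mk w) = ncMap R N g.hom (ncMap R N f.hom (Submodule.Quotient.mk w))
    rw [ncMap_mk, ncMap_mk, ncMap_mk, toInt_comp, LinearMap.lTensor_comp]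
    rfl

instance ncTensorFunctor_additive (N : Type u) [AddCommGroup N] [Module Rᵐᵒᵖ N] :
    (ncTensorFunctor R N).Additive where
  map_add {X Y f g} := by
    refine ModuleCat.hom_ext (LinearMap.ext fun z => ?_)
    obtain ⟨w, rfl⟩ := Submodule.Quotient.mk_surjective _ z
    show ncMap R N (f.hom + g.hom) (Submodule.Quotient.mk w) = ncMap R N f.hom (Submodule.Quotient.mk w) + ncMap R N g.hom (Submodule.Quotient.mk w)
    rw [ncMap_mk, ncMap_mk, ncMap_mk, toInt_add, LinearMap.lTensor_add]
    rfl

/-- `Tor₁^R(N, Z)` for a right `R`-module `N` and a left `R`-module `Z`, defined as the value at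
`Z` of the first left derived functor of the functor `N ⊗[R] -`. -/
noncomputable def ncTor1 (N : Type u) [AddCommGroup N] [Module Rᵐᵒᵖ N]
    (Z : Type u) [AddCommGroup Z] [Module R Z] : ModuleCat.{u} ℤ :=
  (((ncTensorFunctor R N).leftDerived 1).obj (ModuleCat.of R Z))

/-- `Tor₁^R(N, Z) = 0`. -/
def Tor1IsZero (N : Type u) [AddCommGroup N] [Module Rᵐᵒᵖ N]
    (Z : Type u) [AddCommGroup Z] [Module R Z] : Prop :=
  Limits.IsZero (ncTor1 R N Z)

/-- `Ext¹_R(Z, T) = 0`, where `Ext` is the derived functor of `Hom` on the category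
of left `R`-modules. -/
def Ext1IsZero (Z T : Type u) [AddCommGroup Z] [Module R Z] [AddCommGroup T] [Module R T] :
    Prop :=
  Limits.IsZero ((((Ext ℤ (ModuleCat.{u} R) 1).obj (Opposite.op (ModuleCat.of R Z))).obj
    (ModuleCat.of R T)))

end NC

open MulOpposite


section Char

variable (R : Type u) [Ring R]

/-- The right `R`-module structure on the character module `A⁺ = Hom_ℤ(A, ℚ/ℤ)` of a left
`R`-module `A`, given by `(c • r) (a) = c (r • a)`. -/
instance charModuleRight (A : Type u) [AddCommGroup A] [Module R A] :
    Module Rᵐᵒᵖ (CharacterModule A) where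
  smul r c := (c.comp (DistribMulAction.toAddMonoidHom A r.unop) : A →+ _)
  one_smul c := DFunLike.ext _ _ fun a => congrArg c (one_smul R a)
  mul_smul r s c := DFunLike.ext _ _ fun a => congrArg c (mul_smul s.unop r.unop a)
  smul_zero r := rfl
  smul_add r c c' := rfl
  add_smul r s c := DFunLike.ext _ _ fun a => by
    show c ((r.unop + s.unop) • a) = c (r.unop • a) + c (s.unop • a)
    rw [add_smul, map_add]
  zero_smul c := DFunLike.ext _ _ fun a => by
    show c ((0 : R) • a) = 0
    rw [zero_smul, map_zero]

/-- The left `R`-module structure on the character module `N⁺ = Hom_ℤ(N, ℚ/ℤ)` of a right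
`R`-module `N`, given by `(r • c) (n) = c (n • r)`. -/
instance charModuleLeft (N : Type u) [AddCommGroup N] [Module Rᵐᵒᵖ N] :
    Module R (CharacterModule N) where
  smul r c := (c.comp (DistribMulAction.toAddMonoidHom N (op r)) : N →+ _)
  one_smul c := DFunLike.ext _ _ fun n => congrArg c (one_smul Rᵐᵒᵖ n)
  mul_smul r s c := DFunLike.ext _ _ fun n => congrArg c (mul_smul (op s) (op r) n)
  smul_zero r := rfl
  smul_add r c c' := rfl
  add_smul r s c := DFunLike.ext _ _ fun n => by
    show c ((op r + op s) • n) = c (op r • n) + c (op s • n)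
    rw [add_smul, map_add]
  zero_smul c := DFunLike.ext _ _ fun n => by
    show c ((0 : Rᵐᵒᵖ) • n) = 0
    rw [zero_smul, map_zero]

end Char

section Classes

variable (R : Type u) [Ring R] (M : Type u) [AddCommGroup M] [Module R M]

/-- `T` is `M`-`𝒜`-injective if, for every `A ∈ 𝒜`, every homomorphism `A → T` extends to `M`,
i.e. the restriction map `Hom(M, T) → Hom(A, T)` is surjective. -/
def MAInjective (𝒜 : Set (Submodule R M)) (T : Type u) [AddCommGroup T] [Module R T] : Prop :=
  ∀ A ∈ 𝒜, ∀ f : (↥A) →ₗ[R] T, ∃ g : M →ₗ[R] T, g ∘ₗ A.subtype = f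

/-- `T` is strongly `M`-`𝒜`-injective if `Ext¹_R(M/A, T) = 0` for all `A ∈ 𝒜`. -/
def SMAInjective (𝒜 : Set (Submodule R M)) (T : Type u) [AddCommGroup T] [Module R T] : Prop :=
  ∀ A ∈ 𝒜, Ext1IsZero R (M ⧸ A) T

/-- A right `R`-module `N` is `M`-`𝒜`-flat if `N ⊗ A → N ⊗ M` is injective for all `A ∈ 𝒜`. -/
def MAFlat (𝒜 : Set (Submodule R M)) (N : Type u) [AddCommGroup N] [Module Rᵐᵒᵖ N] : Prop :=
  ∀ A ∈ 𝒜, Function.Injective (ncMap R N A.subtype)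

/-- A right `R`-module `N` is strongly `M`-`𝒜`-flat if `Tor₁^R(N, M/A) = 0` for all `A ∈ 𝒜`. -/
def SMAFlat (𝒜 : Set (Submodule R M)) (N : Type u) [AddCommGroup N] [Module Rᵐᵒᵖ N] : Prop :=
  ∀ A ∈ 𝒜, Tor1IsZero R N (M ⧸ A)

end Classes

section Flat

variable (R : Type u) [Ring R]

/-- A left `R`-module `Z` is flat if tensoring with it preserves injectivity of morphisms of
right `R`-modules. -/
def FlatLeftModule (Z : Type u) [AddCommGroup Z] [Module R Z] : Prop :=
  ∀ (N N' : Type u) [AddCommGroup N] [Module Rᵐᵒᵖ N] [AddCommGroup N'] [Module Rᵐᵒᵖ N']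
    (g : N' →ₗ[Rᵐᵒᵖ] N), Function.Injective g → Function.Injective (ncMapL R g Z)

end Flat


set_option linter.unusedSectionVars false

section PiIso

variable {R : Type u} [Ring R] (N : Type u) [AddCommGroup N] [Module Rᵐᵒᵖ N]

/-- The bilinear map `N × (Fin n → R) → (Fin n → N)`. -/
noncomputable def piToBil (n : ℕ) : N →ₗ[ℤ] (Fin n → R) →ₗ[ℤ] (Fin n → N) :=
  LinearMap.mk₂ ℤ (fun m x => fun j => op (x j) • m)
    (fun m m' x => by funext j; simp [smul_add])
    (fun c m x => by funext j; exact smul_comm _ c m)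
    (fun m x x' => by funext j; simp [MulOpposite.op_add, add_smul])
    (fun c m x => by funext j; simp only [Pi.smul_apply, MulOpposite.op_smul, smul_assoc])

/-- The forward map `NCTensor R N (Fin n → R) → (Fin n → N)`. -/
noncomputable def piFun (n : ℕ) : NCTensor R N (Fin n → R) →ₗ[ℤ] (Fin n → N) :=
  Submodule.liftQ _ (TensorProduct.lift (piToBil N n)) (by
    rw [ncRel, Submodule.span_le]
    rintro _ ⟨r, m, x, rfl⟩
    simp only [SetLike.mem_coe, LinearMap.mem_ker, map_sub]
    funext j
    simp only [TensorProduct.lift.tmul, piToBil, LinearMap.mk₂_apply, Pi.sub_apply,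
      Pi.smul_apply, smul_eq_mul, op_mul, mul_smul, sub_self, Pi.zero_apply]
    erw [map_sub, TensorProduct.lift.tmul, TensorProduct.lift.tmul]
    simp only [TensorProduct.lift.tmul, piToBil, LinearMap.mk₂_apply, Pi.sub_apply,
      Pi.smul_apply, smul_eq_mul, op_mul, mul_smul, sub_self, Pi.zero_apply])

lemma piFun_mk_tmul (n : ℕ) (m : N) (x : Fin n → R) :
    piFun N n (Submodule.Quotient.mk (m ⊗ₜ[ℤ] x)) = fun j => op (x j) • m := rfl

/-- The inverse map `(Fin n → N) → NCTensor R N (Fin n → R)`. -/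
noncomputable def piInv (n : ℕ) : (Fin n → N) →ₗ[ℤ] NCTensor R N (Fin n → R) :=
  ∑ j : Fin n, (ncRel R N (Fin n → R)).mkQ ∘ₗ
    ((TensorProduct.mk ℤ N (Fin n → R)).flip (Pi.single j (1 : R))) ∘ₗ
    (LinearMap.proj j : (Fin n → N) →ₗ[ℤ] N)

lemma piInv_apply (n : ℕ) (v : Fin n → N) :
    piInv N n v = ∑ j : Fin n,
      (Submodule.Quotient.mk ((v j) ⊗ₜ[ℤ] (Pi.single j (1 : R) : Fin n → R)) :
        NCTensor R N (Fin n → R)) := by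
  simp [piInv, LinearMap.sum_apply]
  rfl

lemma nc_mk_smul_tmul {X : Type u} [AddCommGroup X] [Module R X] (r : R) (m : N) (x : X) :
    (ncRel R N X).mkQ ((op r • m) ⊗ₜ[ℤ] x) = (ncRel R N X).mkQ (m ⊗ₜ[ℤ] (r • x)) := by
  rw [Submodule.mkQ_apply, Submodule.mkQ_apply, Submodule.Quotient.eq]
  exact Submodule.subset_span ⟨r, m, x, rfl⟩

lemma piFun_piInv (n : ℕ) (v : Fin n → N) : piFun N n (piInv (R := R) N n v) = v := by
  rw [piInv_apply, map_sum]
  funext j'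
  simp only [piFun_mk_tmul, Finset.sum_apply]
  rw [Finset.sum_eq_single j']
  · simp
  · intro j _ hj
    simp [Pi.single_apply, hj]
  · simp

lemma piInv_piFun (n : ℕ) (t : NCTensor R N (Fin n → R)) : piInv N n (piFun N n t) = t := by
  obtain ⟨w, rfl⟩ := Submodule.Quotient.mk_surjective _ t
  induction w with
  | zero => simp
  | add a b ha hb =>
    rw [Submodule.Quotient.mk_add, map_add, map_add, ha, hb]
  | tmul m x =>
    rw [piFun_mk_tmul, piInv_apply]
    have h1 : ∀ j : Fin n, (Submodule.Quotient.mk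
        ((op (x j) • m) ⊗ₜ[ℤ] (Pi.single j (1 : R) : Fin n → R)) :
        NCTensor R N (Fin n → R)) =
        Submodule.Quotient.mk (m ⊗ₜ[ℤ] (Pi.single j (x j) : Fin n → R)) := by
      intro j
      rw [← Submodule.mkQ_apply, nc_mk_smul_tmul, Submodule.mkQ_apply]
      congr 2
      funext j'
      simp [Pi.single_apply, mul_ite]
    simp only [h1]
    have h2 : (∑ j : Fin n, (m ⊗ₜ[ℤ] (Pi.single j (x j) : Fin n → R))) = m ⊗ₜ[ℤ] x := by
      rw [← TensorProduct.tmul_sum]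
      congr 1
      exact Finset.univ_sum_single x
    simp only [← Submodule.mkQ_apply]
    rw [← map_sum, h2]

/-- The map on products induced by a linear map between finite free modules. -/
noncomputable def matMap {a b : ℕ} (f : (Fin a → R) →ₗ[R] (Fin b → R)) (v : Fin a → N) :
    Fin b → N :=
  fun j => ∑ k, op (f (Pi.single k 1) j) • v k

lemma matMap_add {a b : ℕ} (f : (Fin a → R) →ₗ[R] (Fin b → R)) (v w : Fin a → N) :
    matMap N f (v + w) = matMap N f v + matMap N f w := by
  funext j
  simp [matMap, smul_add, Finset.sum_add_distrib]

lemma piFun_ncMap {a b : ℕ} (f : (Fin a → R) →ₗ[R] (Fin b → R))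
    (t : NCTensor R N (Fin a → R)) :
    piFun N b (ncMap R N f t) = matMap N f (piFun N a t) := by
  obtain ⟨w, rfl⟩ := Submodule.Quotient.mk_surjective _ t
  induction w with
  | zero =>
    funext j
    simp [matMap]
  | add u w hu hw =>
    rw [Submodule.Quotient.mk_add, map_add, map_add, map_add, hu, hw, matMap_add]
  | tmul m x =>
    rw [ncMap_mk]
    simp only [LinearMap.lTensor_tmul]
    show piFun N b (Submodule.Quotient.mk (m ⊗ₜ[ℤ] (f x))) = _
    simp only [piFun_mk_tmul]
    funext j
    have hx : f x = ∑ k, x k • f (Pi.single k 1) := by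
      conv_lhs => rw [← Finset.univ_sum_single x]
      rw [map_sum]
      congr 1
      funext k
      rw [← map_smul]
      congr 1
      funext j'
      simp [Pi.single_apply, mul_ite]
    let ψ : R →+ N :=
      { toFun := fun s => op s • m
        map_zero' := by simp
        map_add' := fun s t => by simp [MulOpposite.op_add, add_smul] }
    have h3 : (f x) j = ∑ k, x k * f (Pi.single k 1) j := by
      rw [hx, Finset.sum_apply]
      simp
    calc op ((f x) j) • m = ψ ((f x) j) := rfl
      _ = ∑ k, ψ (x k * f (Pi.single k 1) j) := by rw [h3, map_sum]
      _ = ∑ k, op (f (Pi.single k 1) j) • ((fun k => op (x k) • m) k) := by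
          simp only [ψ, AddMonoidHom.coe_mk, ZeroHom.coe_mk, op_mul, mul_smul]
      _ = matMap N f (fun k => op (x k) • m) j := rfl

lemma matMap_pi_apply {a b : ℕ} {ι : Type u} (G : ι → Type u) [∀ i, AddCommGroup (G i)]
    [∀ i, Module Rᵐᵒᵖ (G i)] (f : (Fin a → R) →ₗ[R] (Fin b → R))
    (v : Fin a → ∀ i, G i) (j : Fin b) (i : ι) :
    matMap (∀ i, G i) f v j i = matMap (G i) f (fun k => v k i) j := by
  simp [matMap, Finset.sum_apply]

end PiIso

section Coherent

variable {R : Type u} [Ring R]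

lemma fp_of_equiv_fp {P Q : Type u} [AddCommGroup P] [Module R P] [AddCommGroup Q] [Module R Q]
    (e : P ≃ₗ[R] Q) [Module.FinitePresentation R P] : Module.FinitePresentation R Q :=
  Module.finitePresentation_of_surjective e.toLinearMap e.surjective
    (by rw [LinearEquiv.ker]; exact Submodule.fg_bot)

set_option synthInstance.maxHeartbeats 1000000 in
set_option maxHeartbeats 1000000 in
lemma coh_fg_submodule
    (hcoh : ∀ I : Submodule R R, I.FG → Module.FinitePresentation R I) :
    ∀ (n : ℕ) (N : Submodule R (Fin n → R)), N.FG → Module.FinitePresentation R N := by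
  intro n
  induction n with
  | zero =>
    intro N _
    have hsub : Subsingleton (Fin 0 → R) := by
      constructor
      intro a b
      funext j
      exact absurd j.2 (by omega)
    have hsub' : Subsingleton N := ⟨fun a b => Subtype.ext (Subsingleton.elim _ _)⟩
    refine Module.finitePresentation_of_surjective
      (0 : (Fin 0 → R) →ₗ[R] N) (fun y => ⟨0, Subsingleton.elim _ _⟩) ?_
    rw [LinearMap.ker_zero]
    exact Module.Finite.fg_top
  | succ n ih =>
    intro N hN
    haveI : Module.Finite R N := Module.Finite.iff_fg.mpr hN
    set l : (Fin (n + 1) → R) →ₗ[R] R := LinearMap.proj (Fin.last n) with hl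
    set I : Submodule R R := N.map l with hI
    haveI hIfp : Module.FinitePresentation R I := hcoh I (hN.map l)
    let l' : N →ₗ[R] I := l.restrict (fun x hx => Submodule.mem_map_of_mem hx)
    have hl'surj : Function.Surjective l' := by
      rintro ⟨y, x, hx, rfl⟩
      exact ⟨⟨x, hx⟩, rfl⟩
    have hKfg : (LinearMap.ker l').FG := Module.FinitePresentation.fg_ker l' hl'surj
    let e : (Fin (n + 1) → R) →ₗ[R] (Fin n → R) := LinearMap.funLeft R R Fin.castSucc
    let f : N →ₗ[R] (Fin n → R) := e ∘ₗ N.subtype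
    set P : Submodule R (Fin n → R) := (LinearMap.ker l').map f with hP
    have hPfg : P.FG := hKfg.map f
    haveI hPfp : Module.FinitePresentation R P := ih P hPfg
    let ψ : (LinearMap.ker l') →ₗ[R] P :=
      (f ∘ₗ (LinearMap.ker l').subtype).codRestrict P
        (fun x => Submodule.mem_map_of_mem x.2)
    have hinj : Function.Injective ψ := by
      intro x y hxy
      have hfx : f x.1 = f y.1 := congrArg Subtype.val hxy
      have hlast : (x.1 : Fin (n + 1) → R) (Fin.last n) = (y.1 : Fin (n + 1) → R) (Fin.last n) := by
        have hx0 : l' x.1 = 0 := x.2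
        have hy0 : l' y.1 = 0 := y.2
        have hx0' : (x.1 : Fin (n + 1) → R) (Fin.last n) = 0 := congrArg Subtype.val hx0
        have hy0' : (y.1 : Fin (n + 1) → R) (Fin.last n) = 0 := congrArg Subtype.val hy0
        rw [hx0', hy0']
      apply Subtype.ext
      apply Subtype.ext
      funext j
      rcases Fin.eq_castSucc_or_eq_last j with ⟨j', rfl⟩ | rfl
      · exact congrFun hfx j'
      · exact hlast
    have hsurj : Function.Surjective ψ := by
      rintro ⟨y, x, hx, rfl⟩
      exact ⟨⟨x, hx⟩, rfl⟩
    haveI : Module.FinitePresentation R (LinearMap.ker l') :=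
      fp_of_equiv_fp (P := P) (Q := ↥(LinearMap.ker l'))
        (LinearEquiv.ofBijective ψ ⟨hinj, hsurj⟩).symm
    exact Module.finitePresentation_of_ker l' hl'surj

end Coherent

section Resol

open CategoryTheory.Limits

variable {C : Type (u+1)} [Category.{u} C] [Abelian C] [EnoughProjectives C]
variable {Z P₀ P₁ P₂ : C} [Projective P₀] [Projective P₁] [Projective P₂]
  (p : P₀ ⟶ Z) (d₁ : P₁ ⟶ P₀) (d₂ : P₂ ⟶ P₁)
  (w₁ : d₁ ≫ p = 0) (w₂ : d₂ ≫ d₁ = 0)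

/-- The inductive step of `resCx`: the syzygy object and its differential. -/
noncomputable def resSucc (S : ShortComplex C) : Σ' (X₃ : C) (d : X₃ ⟶ S.X₁), d ≫ S.f = 0 :=
  ⟨Projective.syzygies S.f, Projective.d S.f, (show Projective.d S.f ≫ S.f = 0 from by
    exact (Category.assoc (Projective.π (kernel S.f)) (kernel.ι S.f) S.f).trans
      (by rw [kernel.condition, Limits.comp_zero]; rfl))⟩

/-- The chain complex extending given data `P₂ ⟶ P₁ ⟶ P₀` by syzygies. -/
noncomputable def resCx : ChainComplex C ℕ :=
  ChainComplex.mk P₀ P₁ P₂ d₁ d₂ w₂ resSucc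

lemma resCx_d_1_0 : (resCx d₁ d₂ w₂).d 1 0 = d₁ := by simp [resCx]

lemma resCx_d_2_1 : (resCx d₁ d₂ w₂).d 2 1 = d₂ := by simp [resCx]

instance resCx_projective (n : ℕ) : Projective ((resCx d₁ d₂ w₂).X n) := by
  obtain (_ | _ | _ | n) := n
  · exact ‹Projective P₀›
  · exact ‹Projective P₁›
  · exact ‹Projective P₂›
  · dsimp [resCx, resSucc, ChainComplex.mk, ChainComplex.mkAux]
    infer_instance

lemma resCx_exactAt (hex1 : (ShortComplex.mk d₂ d₁ w₂).Exact) (n : ℕ) :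
    (resCx d₁ d₂ w₂).ExactAt (n + 1) := by
  rw [HomologicalComplex.exactAt_iff' _ (n + 1 + 1) (n + 1) n (by simp) (by simp)]
  match n with
  | 0 =>
    refine ShortComplex.exact_of_iso ?_ hex1
    refine ShortComplex.isoMk (Iso.refl _) (Iso.refl _) (Iso.refl _) ?_ ?_
    · erw [Category.id_comp, Category.comp_id]
      exact resCx_d_2_1 d₁ d₂ w₂
    · erw [Category.id_comp, Category.comp_id]
      exact resCx_d_1_0 d₁ d₂ w₂
  | n + 1 =>
    refine ShortComplex.exact_of_iso ?_ (exact_d_f ((resCx d₁ d₂ w₂).d (n + 2) (n + 1)))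
    refine ShortComplex.isoMk
      (ChainComplex.mkXIso P₀ P₁ P₂ d₁ d₂ w₂ resSucc n).symm (Iso.refl _) (Iso.refl _) ?_ ?_
    · erw [Category.comp_id, Iso.symm_hom]
      show (ChainComplex.mkXIso P₀ P₁ P₂ d₁ d₂ w₂ resSucc n).inv ≫
        (ChainComplex.mk P₀ P₁ P₂ d₁ d₂ w₂ resSucc).d (n + 3) (n + 2) = _
      rw [ChainComplex.mk_d, Iso.inv_hom_id_assoc]
      rfl
    · erw [Category.id_comp, Category.comp_id]
      rfl

/-- Build a projective resolution from an exact sequence `P₂ ⟶ P₁ ⟶ P₀ ⟶ Z ⟶ 0`. -/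
noncomputable def resolutionOfExact [Epi p]
    (hex0 : (ShortComplex.mk d₁ p w₁).Exact)
    (hex1 : (ShortComplex.mk d₂ d₁ w₂).Exact) :
    ProjectiveResolution Z where
  complex := resCx d₁ d₂ w₂
  π := (ChainComplex.toSingle₀Equiv _ _).symm ⟨p, by rw [resCx_d_1_0]; exact w₁⟩
  quasiIso := ⟨fun n => by
    cases n with
    | zero =>
      rw [ChainComplex.quasiIsoAt₀_iff, ShortComplex.quasiIso_iff_of_zeros']
      · refine (ShortComplex.exact_and_epi_g_iff_of_iso ?_).2 ⟨hex0, ‹Epi p›⟩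
        refine ShortComplex.isoMk (Iso.refl _) (Iso.refl _) (Iso.refl _) ?_ ?_
        · erw [Category.id_comp, Category.comp_id]
          exact (resCx_d_1_0 d₁ d₂ w₂).symm
        · erw [Category.id_comp, Category.comp_id]
          exact (ChainComplex.toSingle₀Equiv_symm_apply_f_zero (C := resCx d₁ d₂ w₂) p _).symm
      all_goals rfl
    | succ n =>
      rw [quasiIsoAt_iff_exactAt']
      · exact resCx_exactAt d₁ d₂ w₂ hex1 n
      · apply ChainComplex.exactAt_succ_single_obj⟩

end Resol

section Key

open CategoryTheory.Limits

variable {R : Type u} [Ring R]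

lemma tor1_iff_exactAt {Z : Type u} [AddCommGroup Z] [Module R Z]
    (P : ProjectiveResolution (ModuleCat.of R Z))
    (N : Type u) [AddCommGroup N] [Module Rᵐᵒᵖ N] :
    Tor1IsZero R N Z ↔
      ((((ncTensorFunctor R N).mapHomologicalComplex _).obj P.complex).sc' 2 1 0).Exact := by
  rw [← HomologicalComplex.exactAt_iff' _ 2 1 0 (by simp) (by simp),
    HomologicalComplex.exactAt_iff_isZero_homology]
  have e := P.isoLeftDerivedObj (ncTensorFunctor R N) 1
  exact ⟨fun h => h.of_iso e.symm, fun h => h.of_iso e⟩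

set_option maxHeartbeats 1000000 in
lemma tor1_iff_of_res {Z : Type u} [AddCommGroup Z] [Module R Z]
    {n m k : ℕ} (p : (Fin n → R) →ₗ[R] Z)
    (d1 : (Fin m → R) →ₗ[R] (Fin n → R)) (d2 : (Fin k → R) →ₗ[R] (Fin m → R))
    (hp : Function.Surjective p)
    (hex0 : ∀ x, p x = 0 → ∃ y, d1 y = x)
    (hex1 : ∀ x, d1 x = 0 → ∃ y, d2 y = x)
    (hw1 : ∀ x, p (d1 x) = 0) (hw2 : ∀ x, d1 (d2 x) = 0)
    (N : Type u) [AddCommGroup N] [Module Rᵐᵒᵖ N] :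
    Tor1IsZero R N Z ↔
      ∀ t : NCTensor R N (Fin m → R), ncMap R N d1 t = 0 →
        ∃ s : NCTensor R N (Fin k → R), ncMap R N d2 s = t := by
  haveI h0 : Projective (ModuleCat.of R (Fin n → R)) :=
    (IsProjective.iff_projective (R := R) (P := Fin n → R)).mp inferInstance
  haveI h1 : Projective (ModuleCat.of R (Fin m → R)) :=
    (IsProjective.iff_projective (R := R) (P := Fin m → R)).mp inferInstance
  haveI h2 : Projective (ModuleCat.of R (Fin k → R)) :=
    (IsProjective.iff_projective (R := R) (P := Fin k → R)).mp inferInstance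
  let pm : ModuleCat.of R (Fin n → R) ⟶ ModuleCat.of R Z := ModuleCat.ofHom p
  let d1m : ModuleCat.of R (Fin m → R) ⟶ ModuleCat.of R (Fin n → R) := ModuleCat.ofHom d1
  let d2m : ModuleCat.of R (Fin k → R) ⟶ ModuleCat.of R (Fin m → R) := ModuleCat.ofHom d2
  have w1 : d1m ≫ pm = 0 := by exact ModuleCat.hom_ext (LinearMap.ext fun x => hw1 x)
  have w2 : d2m ≫ d1m = 0 := by exact ModuleCat.hom_ext (LinearMap.ext fun x => hw2 x)
  haveI : Epi pm := (ModuleCat.epi_iff_surjective pm).mpr hp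
  have hx0 : (ShortComplex.mk d1m pm w1).Exact := by
    rw [ShortComplex.moduleCat_exact_iff]
    exact hex0
  have hx1 : (ShortComplex.mk d2m d1m w2).Exact := by
    rw [ShortComplex.moduleCat_exact_iff]
    exact hex1
  rw [tor1_iff_exactAt (resolutionOfExact pm d1m d2m w1 w2 hx0 hx1) N,
    ShortComplex.moduleCat_exact_iff]
  have hf : (((((ncTensorFunctor R N).mapHomologicalComplex _).obj
      (resolutionOfExact pm d1m d2m w1 w2 hx0 hx1).complex)).sc' 2 1 0).f =
      ModuleCat.ofHom (ncMap R N d2 : NCTensor R N (Fin k → R) →ₗ[ℤ] NCTensor R N (Fin m → R)) := by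
    show (ncTensorFunctor R N).map ((resCx d1m d2m w2).d 2 1) = _
    rw [resCx_d_2_1]
    rfl
  have hg : (((((ncTensorFunctor R N).mapHomologicalComplex _).obj
      (resolutionOfExact pm d1m d2m w1 w2 hx0 hx1).complex)).sc' 2 1 0).g =
      ModuleCat.ofHom (ncMap R N d1 : NCTensor R N (Fin m → R) →ₗ[ℤ] NCTensor R N (Fin n → R)) := by
    show (ncTensorFunctor R N).map ((resCx d1m d2m w2).d 1 0) = _
    rw [resCx_d_1_0]
    rfl
  rw [hf, hg]
  exact Iff.rfl

end Key

set_option maxHeartbeats 1000000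

/-- Let `R` be a left coherent ring (every finitely generated left ideal is finitely presented)
and let `M` be a finitely presented left `R`-module that is `𝒜`-coherent (every `A ∈ 𝒜` is
finitely presented). Then any direct product of strongly `M`-`𝒜`-flat right `R`-modules is
strongly `M`-`𝒜`-flat. -/
theorem stmt14 (R : Type u) [Ring R]
    (hcoh : ∀ I : Submodule R R, I.FG → Module.FinitePresentation R I)
    (M : Type u) [AddCommGroup M] [Module R M]
    (𝒜 : Set (Submodule R M)) [Module.FinitePresentation R M]
    (h𝒜 : ∀ A ∈ 𝒜, Module.FinitePresentation R A)
    (ι : Type u) (G : ι → Type u) [∀ i, AddCommGroup (G i)] [∀ i, Module Rᵐᵒᵖ (G i)]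
    (h : ∀ i, SMAFlat R M 𝒜 (G i)) :
    SMAFlat R M 𝒜 (∀ i, G i) := by
  intro A hA
  haveI hAfp := h𝒜 A hA
  have hAfg : A.FG := Module.Finite.iff_fg.mp inferInstance
  haveI hZfp : Module.FinitePresentation R (M ⧸ A) :=
    Module.finitePresentation_of_surjective A.mkQ (Submodule.mkQ_surjective A)
      (by rw [Submodule.ker_mkQ]; exact hAfg)
  obtain ⟨n, p, hp⟩ := Module.Finite.exists_fin' R (M ⧸ A)
  have hK0fg : (LinearMap.ker p).FG := Module.FinitePresentation.fg_ker p hp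
  haveI hK0fp := coh_fg_submodule hcoh n _ hK0fg
  obtain ⟨m, q, hq⟩ := Module.Finite.exists_fin' R (LinearMap.ker p)
  let d1 : (Fin m → R) →ₗ[R] (Fin n → R) := (LinearMap.ker p).subtype ∘ₗ q
  have hd1ker : LinearMap.ker d1 = LinearMap.ker q := by
    rw [LinearMap.ker_comp, Submodule.ker_subtype, Submodule.comap_bot]
  have hK1fg : (LinearMap.ker d1).FG := by
    rw [hd1ker]
    exact Module.FinitePresentation.fg_ker q hq
  haveI hK1fp := coh_fg_submodule hcoh m _ hK1fg
  obtain ⟨k, r, hr⟩ := Module.Finite.exists_fin' R (LinearMap.ker d1)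
  let d2 : (Fin k → R) →ₗ[R] (Fin m → R) := (LinearMap.ker d1).subtype ∘ₗ r
  have hw1 : ∀ x, p (d1 x) = 0 := fun x => (q x).2
  have hw2 : ∀ x, d1 (d2 x) = 0 := fun x => (r x).2
  have hex0 : ∀ x, p x = 0 → ∃ y, d1 y = x := by
    intro x hx
    obtain ⟨y, hy⟩ := hq ⟨x, hx⟩
    exact ⟨y, congrArg Subtype.val hy⟩
  have hex1 : ∀ x, d1 x = 0 → ∃ y, d2 y = x := by
    intro x hx
    obtain ⟨y, hy⟩ := hr ⟨x, hx⟩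
    exact ⟨y, congrArg Subtype.val hy⟩
  rw [tor1_iff_of_res p d1 d2 hp hex0 hex1 hw1 hw2]
  intro t ht
  set v := piFun (∀ i, G i) m t with hv
  have hvmat : matMap (∀ i, G i) d1 v = 0 := by
    rw [hv, ← piFun_ncMap, ht, map_zero]
  have hcomp : ∀ i : ι, ∃ s : NCTensor R (G i) (Fin k → R),
      ncMap R (G i) d2 s = piInv (R := R) (G i) m (fun j => v j i) := by
    intro i
    have hGi := (tor1_iff_of_res p d1 d2 hp hex0 hex1 hw1 hw2 (G i)).mp (h i A hA)
    apply hGi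
    have hinjn : Function.Injective (piFun (G i) n) :=
      Function.LeftInverse.injective (g := piInv (R := R) (G i) n) (piInv_piFun (G i) n)
    apply hinjn
    rw [map_zero, piFun_ncMap, piFun_piInv]
    funext j
    have h1 := congrFun (congrFun hvmat j) i
    rw [← matMap_pi_apply] 
    simpa using h1
  choose s hs using hcomp
  set w : Fin k → (∀ i, G i) := fun j i => piFun (G i) k (s i) j with hwdef
  refine ⟨piInv (R := R) (∀ i, G i) k w, ?_⟩
  have hinjm : Function.Injective (piFun (∀ i, G i) m) :=
    Function.LeftInverse.injective (g := piInv (R := R) (∀ i, G i) m) (piInv_piFun (∀ i, G i) m)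
  apply hinjm
  rw [piFun_ncMap, piFun_piInv, ← hv]
  funext j i
  rw [matMap_pi_apply]
  have hwi : (fun j' => w j' i) = piFun (G i) k (s i) := rfl
  rw [hwi, ← piFun_ncMap, hs i, piFun_piInv]
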